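/- Let V₁ and V₂ be commuting isometries on a complex Hilbert space H, V := V₁V₂, C := I − V₁V₁* − V₂V₂* + VV*, W := ker V*, W₁ := ker V₁*, W₂ := ker V₂*. Then the following conditions are equivalent: (1) C = 0; (2) V₂(W₁) = W₁ (equivalently V₁(W₂) = W₂); (3) the Fringe operators are unitary on the wandering subspaces, i.e., F₂*F₂ = F₂F₂* = P_{W₁} and F₁*F₁ = F₁F₁* = P_{W₂}; (4) W = W₁ ⊕ W₂ as an orthogonal direct sum; (5) H = (ran V₁ ∩ (ran V)ᗮ) ⊕ (ran V₂ ∩ (ran V)ᗮ) ⊕ ran V as an orthogonal direct sum. -/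

import Mathlib

set_option linter.unusedSectionVars false

open ContinuousLinearMap
open scoped InnerProductSpace

section Aux
variable {H : Type*} [NormedAddCommGroup H] [InnerProductSpace ℂ H] [CompleteSpace H]

private lemma projMemRange {p : H →L[ℂ] H} (hp : p * p = p) {x : H} :
    x ∈ LinearMap.range (p : H →ₗ[ℂ] H) ↔ p x = x := by
  constructor
  · rintro ⟨y, rfl⟩
    have := DFunLike.congr_fun hp y
    simpa [ContinuousLinearMap.mul_apply] using this
  · intro h; exact ⟨x, h⟩

private lemma saInner {p : H →L[ℂ] H} (hp : star p = p) (x y : H) :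
    ⟪p x, y⟫_ℂ = ⟪x, p y⟫_ℂ := by
  conv_lhs => rw [← hp, ContinuousLinearMap.star_eq_adjoint]
  exact ContinuousLinearMap.adjoint_inner_left p y x

private lemma projExt {p q : H →L[ℂ] H} (hp : p * p = p) (hq : q * q = q)
    (hps : star p = p) (hqs : star q = q)
    (h : LinearMap.range (p : H →ₗ[ℂ] H) = LinearMap.range (q : H →ₗ[ℂ] H)) : p = q := by
  have hpq : p * q = q := by
    ext x
    have hm : q x ∈ LinearMap.range (p : H →ₗ[ℂ] H) := h ▸ LinearMap.mem_range_self (q : H →ₗ[ℂ] H) x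
    simpa [ContinuousLinearMap.mul_apply] using (projMemRange hp).mp hm
  have hqp : q * p = p := by
    ext x
    have hm : p x ∈ LinearMap.range (q : H →ₗ[ℂ] H) := h.symm ▸ LinearMap.mem_range_self (p : H →ₗ[ℂ] H) x
    simpa [ContinuousLinearMap.mul_apply] using (projMemRange hq).mp hm
  calc p = q * p := hqp.symm
    _ = star (p * q) := by rw [star_mul, hps, hqs]
    _ = star q := by rw [hpq]
    _ = q := hqs

private lemma kerAdjIff (W : H →L[ℂ] H) (h : star W * W = 1) (x : H) :
    x ∈ LinearMap.ker (adjoint W : H →ₗ[ℂ] H) ↔ (1 - W * star W) x = x := by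
  rw [LinearMap.mem_ker]
  constructor
  · intro hx
    have : (adjoint W) x = 0 := hx
    simp [ContinuousLinearMap.sub_apply, ContinuousLinearMap.mul_apply,
      ContinuousLinearMap.one_apply, ContinuousLinearMap.star_eq_adjoint, this]
  · intro hx
    have h0 : W ((star W) x) = 0 := by
      have := hx
      rw [ContinuousLinearMap.sub_apply, ContinuousLinearMap.one_apply,
        ContinuousLinearMap.mul_apply, sub_eq_self] at this
      exact this
    have : (star W) x = (star W * W) ((star W) x) := by rw [h]; rfl
    rw [ContinuousLinearMap.mul_apply] at this
    -- star W * W applied: star W (W (star W x)) = star W 0 = 0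
    have h1 : (star W) x = (star W) (W ((star W) x)) := this
    rw [h0, map_zero] at h1
    exact h1
  
private lemma rangeIff (W : H →L[ℂ] H) (h : star W * W = 1) (x : H) :
    x ∈ LinearMap.range (W : H →ₗ[ℂ] H) ↔ (W * star W) x = x := by
  constructor
  · rintro ⟨y, rfl⟩
    have : (star W) (W y) = (star W * W) y := rfl
    simp [ContinuousLinearMap.mul_apply, this, h, ContinuousLinearMap.one_apply]
  · intro hx; exact ⟨(star W) x, hx⟩

private lemma orthRange (W : H →L[ℂ] H) :
    (LinearMap.range (W : H →ₗ[ℂ] H))ᗮ = LinearMap.ker (adjoint W : H →ₗ[ℂ] H) := by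
  ext x
  rw [Submodule.mem_orthogonal, LinearMap.mem_ker, ContinuousLinearMap.coe_coe]
  constructor
  · intro hx
    refine ext_inner_left ℂ fun v => ?_
    rw [inner_zero_right, ContinuousLinearMap.adjoint_inner_right]
    exact hx _ (LinearMap.mem_range_self (W : H →ₗ[ℂ] H) v)
  · rintro hx u ⟨y, rfl⟩
    simp only [ContinuousLinearMap.coe_coe] at hx ⊢; rw [← ContinuousLinearMap.adjoint_inner_right, hx, inner_zero_right]

private lemma anticommOf (p q : H →L[ℂ] H) (hp : p * p = p) (hq : q * q = q)
    (h : p * q + q * p = 0) : p * q = 0 := by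
  have e1 : p * q + p * (q * p) = 0 := by
    have := congrArg (fun t => p * t) h
    simpa [mul_add, ← mul_assoc, hp] using this
  have e2 : p * (q * p) + q * p = 0 := by
    have := congrArg (fun t => t * p) h
    have hqpp : q * (p * p) = q * p := by rw [hp]
    simpa [add_mul, mul_assoc, hqpp] using this
  have hcm : p * q = q * p := by
    have f1 : p * q = -(p * (q * p)) := eq_neg_of_add_eq_zero_left e1
    have f2 : q * p = -(p * (q * p)) := eq_neg_of_add_eq_zero_right e2
    exact f1.trans f2.symm
  rw [← hcm] at h
  have h2 : (2:ℂ) • (p * q) = 0 := by rw [two_smul]; exact h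
  simpa [two_ne_zero] using smul_eq_zero.mp h2

end Aux

set_option maxHeartbeats 2000000 in
/-- Let `V₁, V₂` be commuting isometries on a complex Hilbert space,
`V := V₁V₂`, `C := I − V₁V₁* − V₂V₂* + VV*`, `W := ker V*`, `W₁ := ker V₁*`,
`W₂ := ker V₂*`, with Fringe operators `F₁ := P_{W₂}V₁P_{W₂}`, `F₂ := P_{W₁}V₂P_{W₁}`.
The following are equivalent: (1) `C = 0`; (2) `V₂(W₁) = W₁` (equivalently `V₁(W₂) = W₂`);
(3) the Fringe operators are unitary on the wandering subspaces; (4) `W = W₁ ⊕ W₂`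
orthogonally; (5) `H = (ran V₁ ⊖ ran V) ⊕ (ran V₂ ⊖ ran V) ⊕ ran V` orthogonally. -/
theorem stmt10 {H : Type*} [NormedAddCommGroup H] [InnerProductSpace ℂ H] [CompleteSpace H]
    (V₁ V₂ : H →L[ℂ] H)
    (hV₁ : adjoint V₁ ∘L V₁ = 1) (hV₂ : adjoint V₂ ∘L V₂ = 1)
    (hcomm : V₁ ∘L V₂ = V₂ ∘L V₁)
    (C F₁ F₂ : H →L[ℂ] H)
    (hC : C = 1 - V₁ ∘L adjoint V₁ - V₂ ∘L adjoint V₂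
        + (V₁ ∘L V₂) ∘L adjoint (V₁ ∘L V₂))
    (hF₁ : F₁ = (1 - V₂ ∘L adjoint V₂) ∘L (V₁ ∘L (1 - V₂ ∘L adjoint V₂)))
    (hF₂ : F₂ = (1 - V₁ ∘L adjoint V₁) ∘L (V₂ ∘L (1 - V₁ ∘L adjoint V₁))) :
    List.TFAE
      [C = 0,
       Submodule.map (V₂ : H →ₗ[ℂ] H) (LinearMap.ker (adjoint V₁ : H →ₗ[ℂ] H)) = LinearMap.ker (adjoint V₁ : H →ₗ[ℂ] H),
       Submodule.map (V₁ : H →ₗ[ℂ] H) (LinearMap.ker (adjoint V₂ : H →ₗ[ℂ] H)) = LinearMap.ker (adjoint V₂ : H →ₗ[ℂ] H),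
       adjoint F₂ ∘L F₂ = 1 - V₁ ∘L adjoint V₁ ∧
         F₂ ∘L adjoint F₂ = 1 - V₁ ∘L adjoint V₁ ∧
         adjoint F₁ ∘L F₁ = 1 - V₂ ∘L adjoint V₂ ∧
         F₁ ∘L adjoint F₁ = 1 - V₂ ∘L adjoint V₂,
       LinearMap.ker (adjoint (V₁ ∘L V₂) : H →ₗ[ℂ] H) =
           LinearMap.ker (adjoint V₁ : H →ₗ[ℂ] H) ⊔ LinearMap.ker (adjoint V₂ : H →ₗ[ℂ] H) ∧
         (∀ x ∈ LinearMap.ker (adjoint V₁ : H →ₗ[ℂ] H), ∀ y ∈ LinearMap.ker (adjoint V₂ : H →ₗ[ℂ] H),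
           ⟪x, y⟫_ℂ = 0),
       (LinearMap.range (V₁ : H →ₗ[ℂ] H) ⊓ (LinearMap.range ((V₁ ∘L V₂ : H →L[ℂ] H) : H →ₗ[ℂ] H))ᗮ) ⊔
           (LinearMap.range (V₂ : H →ₗ[ℂ] H) ⊓ (LinearMap.range ((V₁ ∘L V₂ : H →L[ℂ] H) : H →ₗ[ℂ] H))ᗮ) ⊔
           LinearMap.range ((V₁ ∘L V₂ : H →L[ℂ] H) : H →ₗ[ℂ] H) = ⊤ ∧
         (∀ x ∈ LinearMap.range (V₁ : H →ₗ[ℂ] H) ⊓ (LinearMap.range ((V₁ ∘L V₂ : H →L[ℂ] H) : H →ₗ[ℂ] H))ᗮ,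
           ∀ y ∈ LinearMap.range (V₂ : H →ₗ[ℂ] H) ⊓ (LinearMap.range ((V₁ ∘L V₂ : H →L[ℂ] H) : H →ₗ[ℂ] H))ᗮ, ⟪x, y⟫_ℂ = 0) ∧
         (∀ x ∈ LinearMap.range (V₁ : H →ₗ[ℂ] H) ⊓ (LinearMap.range ((V₁ ∘L V₂ : H →L[ℂ] H) : H →ₗ[ℂ] H))ᗮ,
           ∀ y ∈ LinearMap.range ((V₁ ∘L V₂ : H →L[ℂ] H) : H →ₗ[ℂ] H), ⟪x, y⟫_ℂ = 0) ∧
         (∀ x ∈ LinearMap.range (V₂ : H →ₗ[ℂ] H) ⊓ (LinearMap.range ((V₁ ∘L V₂ : H →L[ℂ] H) : H →ₗ[ℂ] H))ᗮ,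
           ∀ y ∈ LinearMap.range ((V₁ ∘L V₂ : H →L[ℂ] H) : H →ₗ[ℂ] H), ⟪x, y⟫_ℂ = 0)] := by
  -- basic star/mul forms of the hypotheses
  have h1 : star V₁ * V₁ = 1 := hV₁
  have h2 : star V₂ * V₂ = 1 := hV₂
  have hc : V₁ * V₂ = V₂ * V₁ := hcomm
  have hcs : star V₁ * star V₂ = star V₂ * star V₁ := by
    have := congrArg star hc
    simp only [star_mul] at this
    exact this.symm
  have h1' : ∀ f : H →L[ℂ] H, star V₁ * (V₁ * f) = f := fun f => by
    rw [← mul_assoc, h1, one_mul]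
  have h2' : ∀ f : H →L[ℂ] H, star V₂ * (V₂ * f) = f := fun f => by
    rw [← mul_assoc, h2, one_mul]
  have hc' : ∀ f : H →L[ℂ] H, V₂ * (V₁ * f) = V₁ * (V₂ * f) := fun f => by
    rw [← mul_assoc, ← hc, mul_assoc]
  have hV : star (V₁ * V₂) * (V₁ * V₂) = 1 := by
    rw [star_mul, mul_assoc, h1', h2]
  -- raw product facts
  have b5 : (V₁ * star V₁) * (V₁ * V₂) = V₁ * V₂ := by
    rw [mul_assoc, h1']
  have b6 : (V₂ * star V₂) * (V₁ * V₂) = V₁ * V₂ := by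
    rw [hc, mul_assoc, h2']
  have c1 : V₂ * (V₁ * star V₁) * star V₂ = (V₁ * V₂) * star (V₁ * V₂) := by
    simp only [star_mul, mul_assoc]
    rw [hcs, hc']
  have c2 : V₁ * (V₂ * star V₂) * star V₁ = (V₁ * V₂) * star (V₁ * V₂) := by
    simp only [star_mul, mul_assoc]
  have hC' : C = 1 - V₁ * star V₁ - V₂ * star V₂ + (V₁ * V₂) * star (V₁ * V₂) := hC
  -- abbreviations
  set p₁ : H →L[ℂ] H := V₁ * star V₁ with hp₁def
  set p₂ : H →L[ℂ] H := V₂ * star V₂ with hp₂def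
  set pv : H →L[ℂ] H := (V₁ * V₂) * star (V₁ * V₂) with hpvdef
  have sp₁ : star p₁ = p₁ := by rw [hp₁def]; simp [star_mul]
  have sp₂ : star p₂ = p₂ := by rw [hp₂def]; simp [star_mul]
  have spv : star pv = pv := by rw [hpvdef]; simp [star_mul, mul_assoc]
  have i₁ : p₁ * p₁ = p₁ := by rw [hp₁def, mul_assoc, ← mul_assoc (star V₁), h1, one_mul]
  have i₂ : p₂ * p₂ = p₂ := by rw [hp₂def, mul_assoc, ← mul_assoc (star V₂), h2, one_mul]
  have iv : pv * pv = pv := by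
    rw [hpvdef, mul_assoc, ← mul_assoc (star (V₁ * V₂)), hV, one_mul]
  have a4 : p₁ * pv = pv := by rw [hpvdef, ← mul_assoc, b5]
  have a5 : pv * p₁ = pv := by
    conv_lhs => rw [← spv, ← sp₁, ← star_mul, a4]
    exact spv
  have a6 : p₂ * pv = pv := by rw [hpvdef, ← mul_assoc, b6]
  have a7 : pv * p₂ = pv := by
    conv_lhs => rw [← spv, ← sp₂, ← star_mul, a6]
    exact spv
  have b7 : star (V₁ * V₂) * pv = star (V₁ * V₂) := by
    rw [hpvdef, ← mul_assoc, hV, one_mul]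
  have b8 : pv * (V₁ * V₂) = V₁ * V₂ := by
    rw [hpvdef, mul_assoc, hV, mul_one]
  have b3 : star (V₁ * V₂) * p₁ = star (V₁ * V₂) := by
    have h := congrArg star b5
    rw [star_mul] at h
    rw [sp₁] at h
    exact h
  have b4 : star (V₁ * V₂) * p₂ = star (V₁ * V₂) := by
    have h := congrArg star b6
    rw [star_mul] at h
    rw [sp₂] at h
    exact h
  set q₁ : H →L[ℂ] H := 1 - p₁ with hq₁def
  set q₂ : H →L[ℂ] H := 1 - p₂ with hq₂def
  set qv : H →L[ℂ] H := 1 - pv with hqvdef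
  set r₁ : H →L[ℂ] H := p₁ - pv with hr₁def
  set r₂ : H →L[ℂ] H := p₂ - pv with hr₂def
  have jq₁ : q₁ * q₁ = q₁ := by
    simp only [hq₁def, sub_mul, mul_sub, one_mul, mul_one, i₁]; abel
  have jq₂ : q₂ * q₂ = q₂ := by
    simp only [hq₂def, sub_mul, mul_sub, one_mul, mul_one, i₂]; abel
  have jqv : qv * qv = qv := by
    simp only [hqvdef, sub_mul, mul_sub, one_mul, mul_one, iv]; abel
  have jr₁ : r₁ * r₁ = r₁ := by
    simp only [hr₁def, sub_mul, mul_sub, i₁, iv, a4, a5]; abel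
  have jr₂ : r₂ * r₂ = r₂ := by
    simp only [hr₂def, sub_mul, mul_sub, i₂, iv, a6, a7]; abel
  have sq₁ : star q₁ = q₁ := by simp [hq₁def, star_sub, sp₁]
  have sq₂ : star q₂ = q₂ := by simp [hq₂def, star_sub, sp₂]
  have sqv : star qv = qv := by simp [hqvdef, star_sub, spv]
  have sr₁ : star r₁ = r₁ := by simp [hr₁def, star_sub, sp₁, spv]
  have sr₂ : star r₂ = r₂ := by simp [hr₂def, star_sub, sp₂, spv]
  have zr₁pv : r₁ * pv = 0 := by
    simp only [hr₁def, sub_mul, a4, iv]; abel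
  have zpvr₁ : pv * r₁ = 0 := by
    simp only [hr₁def, mul_sub, a5, iv]; abel
  have zr₂pv : r₂ * pv = 0 := by
    simp only [hr₂def, sub_mul, a6, iv]; abel
  have zpvr₂ : pv * r₂ = 0 := by
    simp only [hr₂def, mul_sub, a7, iv]; abel
  -- the defect operator in various forms
  have d1 : V₂ * q₁ * star V₂ = r₂ := by
    simp only [hq₁def, hr₂def, mul_sub, sub_mul, mul_one, c1, hp₂def, hpvdef]
  have d2 : V₁ * q₂ * star V₁ = r₁ := by
    simp only [hq₂def, hr₁def, mul_sub, sub_mul, mul_one, c2, hp₁def, hpvdef]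
  have hCform : C = q₁ - r₂ := by simp only [hC', hq₁def, hq₂def, hqvdef, hr₁def, hr₂def]; abel
  have hCform2 : C = q₂ - r₁ := by simp only [hC', hq₁def, hq₂def, hqvdef, hr₁def, hr₂def]; abel
  have hCform3 : C = q₁ + q₂ - qv := by simp only [hC', hq₁def, hq₂def, hqvdef, hr₁def, hr₂def]; abel
  have hCform4 : C = 1 - (r₁ + r₂ + pv) := by simp only [hC', hq₁def, hq₂def, hqvdef, hr₁def, hr₂def]; abel
  -- membership characterizations
  have mk₁ : ∀ x : H, x ∈ LinearMap.ker (adjoint V₁ : H →ₗ[ℂ] H) ↔ q₁ x = x := fun x =>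
    kerAdjIff V₁ h1 x
  have mk₂ : ∀ x : H, x ∈ LinearMap.ker (adjoint V₂ : H →ₗ[ℂ] H) ↔ q₂ x = x := fun x =>
    kerAdjIff V₂ h2 x
  have mkv : ∀ x : H, x ∈ LinearMap.ker (adjoint (V₁ ∘L V₂) : H →ₗ[ℂ] H) ↔ qv x = x := fun x =>
    kerAdjIff (V₁ * V₂) hV x
  have mr₁ : ∀ x : H, x ∈ LinearMap.range (V₁ : H →ₗ[ℂ] H) ↔ p₁ x = x := fun x => rangeIff V₁ h1 x
  have mr₂ : ∀ x : H, x ∈ LinearMap.range (V₂ : H →ₗ[ℂ] H) ↔ p₂ x = x := fun x => rangeIff V₂ h2 x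
  have mrv : ∀ x : H, x ∈ LinearMap.range (V₁ ∘L V₂ : H →ₗ[ℂ] H) ↔ pv x = x := fun x =>
    rangeIff (V₁ * V₂) hV x
  -- pointwise idempotency
  have pq₁ : ∀ x : H, q₁ (q₁ x) = q₁ x := fun x => by
    simpa [ContinuousLinearMap.mul_apply] using DFunLike.congr_fun jq₁ x
  have pq₂ : ∀ x : H, q₂ (q₂ x) = q₂ x := fun x => by
    simpa [ContinuousLinearMap.mul_apply] using DFunLike.congr_fun jq₂ x
  -- ranges of the projections
  have rgq₁ : LinearMap.range (q₁ : H →ₗ[ℂ] H) = LinearMap.ker (adjoint V₁ : H →ₗ[ℂ] H) :=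
    Submodule.ext fun x => (projMemRange jq₁).trans (mk₁ x).symm
  have rgq₂ : LinearMap.range (q₂ : H →ₗ[ℂ] H) = LinearMap.ker (adjoint V₂ : H →ₗ[ℂ] H) :=
    Submodule.ext fun x => (projMemRange jq₂).trans (mk₂ x).symm
  have rgqv : LinearMap.range (qv : H →ₗ[ℂ] H) = LinearMap.ker (adjoint (V₁ ∘L V₂) : H →ₗ[ℂ] H) :=
    Submodule.ext fun x => (projMemRange jqv).trans (mkv x).symm
  -- range r₂ = V₂ (ker V₁*)
  have rgr₂ : LinearMap.range (r₂ : H →ₗ[ℂ] H) = Submodule.map (V₂ : H →ₗ[ℂ] H) (LinearMap.ker (adjoint V₁ : H →ₗ[ℂ] H)) := by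
    ext y
    constructor
    · rintro ⟨x, rfl⟩
      refine ⟨q₁ ((star V₂) x), (mk₁ _).mpr (pq₁ _), ?_⟩
      have := DFunLike.congr_fun d1 x
      simpa [ContinuousLinearMap.mul_apply] using this
    · rintro ⟨x, hx, rfl⟩
      have hq : q₁ x = x := (mk₁ x).mp hx
      refine ⟨V₂ x, ?_⟩
      have hop : r₂ * V₂ = V₂ * q₁ := by
        rw [← d1, mul_assoc (V₂ * q₁), h2, mul_one]
      have := DFunLike.congr_fun hop (x)
      simp only [ContinuousLinearMap.mul_apply] at this
      rw [ContinuousLinearMap.coe_coe, ContinuousLinearMap.coe_coe, this, hq]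
  have rgr₁ : LinearMap.range (r₁ : H →ₗ[ℂ] H) = Submodule.map (V₁ : H →ₗ[ℂ] H) (LinearMap.ker (adjoint V₂ : H →ₗ[ℂ] H)) := by
    ext y
    constructor
    · rintro ⟨x, rfl⟩
      refine ⟨q₂ ((star V₁) x), (mk₂ _).mpr (pq₂ _), ?_⟩
      have := DFunLike.congr_fun d2 x
      simpa [ContinuousLinearMap.mul_apply] using this
    · rintro ⟨x, hx, rfl⟩
      have hq : q₂ x = x := (mk₂ x).mp hx
      refine ⟨V₁ x, ?_⟩
      have hop : r₁ * V₁ = V₁ * q₂ := by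
        rw [← d2, mul_assoc (V₁ * q₂), h1, mul_one]
      have := DFunLike.congr_fun hop (x)
      simp only [ContinuousLinearMap.mul_apply] at this
      rw [ContinuousLinearMap.coe_coe, ContinuousLinearMap.coe_coe, this, hq]
  -- range r₁ / r₂ as intersections
  have mir₁ : ∀ x : H,
      x ∈ LinearMap.range (V₁ : H →ₗ[ℂ] H) ⊓ (LinearMap.range (V₁ ∘L V₂ : H →ₗ[ℂ] H))ᗮ ↔ r₁ x = x := by
    intro x
    rw [Submodule.mem_inf, orthRange, mr₁, LinearMap.mem_ker]
    constructor
    · rintro ⟨hp, hk⟩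
      have hpv : pv x = 0 := by
        have : pv x = (V₁ * V₂) ((adjoint (V₁ ∘L V₂)) x) := rfl
        rw [ContinuousLinearMap.coe_coe] at hk; rw [this, hk, map_zero]
      have : r₁ x = p₁ x - pv x := rfl
      rw [this, hp, hpv, sub_zero]
    · intro hr
      have hp : p₁ x = x := by
        have hpr : p₁ * r₁ = r₁ := by
          simp only [hr₁def, mul_sub, i₁, a4]
        have := DFunLike.congr_fun hpr x
        simp only [ContinuousLinearMap.mul_apply] at this
        rw [hr] at this
        -- this : p₁ x = x
        exact this
      refine ⟨hp, ?_⟩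
      have hsr : star (V₁ * V₂) * r₁ = 0 := by
        simp only [hr₁def, mul_sub, b3, b7]; abel
      have := DFunLike.congr_fun hsr x
      simp only [ContinuousLinearMap.mul_apply, ContinuousLinearMap.zero_apply] at this
      rw [hr] at this
      exact this
  have mir₂ : ∀ x : H,
      x ∈ LinearMap.range (V₂ : H →ₗ[ℂ] H) ⊓ (LinearMap.range (V₁ ∘L V₂ : H →ₗ[ℂ] H))ᗮ ↔ r₂ x = x := by
    intro x
    rw [Submodule.mem_inf, orthRange, mr₂, LinearMap.mem_ker]
    constructor
    · rintro ⟨hp, hk⟩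
      have hpv : pv x = 0 := by
        have : pv x = (V₁ * V₂) ((adjoint (V₁ ∘L V₂)) x) := rfl
        rw [ContinuousLinearMap.coe_coe] at hk; rw [this, hk, map_zero]
      have : r₂ x = p₂ x - pv x := rfl
      rw [this, hp, hpv, sub_zero]
    · intro hr
      have hpr : p₂ * r₂ = r₂ := by
        simp only [hr₂def, mul_sub, i₂, a6]
      have hp : p₂ x = x := by
        have := DFunLike.congr_fun hpr x
        simp only [ContinuousLinearMap.mul_apply] at this
        rw [hr] at this
        exact this
      refine ⟨hp, ?_⟩
      have hsr : star (V₁ * V₂) * r₂ = 0 := by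
        simp only [hr₂def, mul_sub, b4, b7]; abel
      have := DFunLike.congr_fun hsr x
      simp only [ContinuousLinearMap.mul_apply, ContinuousLinearMap.zero_apply] at this
      rw [hr] at this
      exact this
  tfae_have 1 ↔ 2 := by
    rw [hCform, sub_eq_zero]
    constructor
    · intro h
      rw [← rgr₂, ← rgq₁, h]
    · intro h
      exact (projExt jr₂ jq₁ sr₂ sq₁ (by rw [rgr₂, rgq₁]; exact h)).symm
  tfae_have 1 ↔ 3 := by
    rw [hCform2, sub_eq_zero]
    constructor
    · intro h
      rw [← rgr₁, ← rgq₂, h]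
    · intro h
      exact (projExt jr₁ jq₂ sr₁ sq₂ (by rw [rgr₁, rgq₂]; exact h)).symm
  tfae_have 1 → 4 := by
    intro h0
    have hr2 : r₂ = q₁ := by
      have := hCform.symm.trans h0
      exact (sub_eq_zero.mp this).symm
    have hr1 : r₁ = q₂ := by
      have := hCform2.symm.trans h0
      exact (sub_eq_zero.mp this).symm
    have hF₂' : F₂ = q₁ * (V₂ * q₁) := hF₂
    have hF₁' : F₁ = q₂ * (V₁ * q₂) := hF₁
    have key₂ : q₁ * (V₂ * q₁) = V₂ * q₁ :=
      calc q₁ * (V₂ * q₁) = (V₂ * q₁ * star V₂) * (V₂ * q₁) := by rw [d1, hr2]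
        _ = V₂ * q₁ := by
            rw [mul_assoc (V₂ * q₁), ← mul_assoc (star V₂), h2, one_mul, mul_assoc, jq₁]
    have key₁ : q₂ * (V₁ * q₂) = V₁ * q₂ :=
      calc q₂ * (V₁ * q₂) = (V₁ * q₂ * star V₁) * (V₁ * q₂) := by rw [d2, hr1]
        _ = V₁ * q₂ := by
            rw [mul_assoc (V₁ * q₂), ← mul_assoc (star V₁), h1, one_mul, mul_assoc, jq₂]
    have hF₂v : F₂ = V₂ * q₁ := hF₂'.trans key₂
    have hF₁v : F₁ = V₁ * q₂ := hF₁'.trans key₁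
    have sF₂ : star F₂ = q₁ * star V₂ := by rw [hF₂v, star_mul, sq₁]
    have sF₁ : star F₁ = q₂ * star V₁ := by rw [hF₁v, star_mul, sq₂]
    refine ⟨?_, ?_, ?_, ?_⟩
    · show star F₂ * F₂ = q₁
      rw [sF₂, hF₂v, mul_assoc, ← mul_assoc (star V₂), h2, one_mul, jq₁]
    · show F₂ * star F₂ = q₁
      rw [sF₂, hF₂v, mul_assoc, ← mul_assoc q₁ q₁, jq₁, ← mul_assoc, d1, hr2]
    · show star F₁ * F₁ = q₂
      rw [sF₁, hF₁v, mul_assoc, ← mul_assoc (star V₁), h1, one_mul, jq₂]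
    · show F₁ * star F₁ = q₂
      rw [sF₁, hF₁v, mul_assoc, ← mul_assoc q₂ q₂, jq₂, ← mul_assoc, d2, hr1]
  tfae_have 4 → 1 := by
    rintro ⟨hA, hB, -, -⟩
    have hA' : star F₂ * F₂ = q₁ := hA
    have hB' : F₂ * star F₂ = q₁ := hB
    have hF₂' : F₂ = q₁ * (V₂ * q₁) := hF₂
    set m : H →L[ℂ] H := V₂ * q₁ with hmdef
    set a : H →L[ℂ] H := star V₁ * m with hadef
    have sm : star m = q₁ * star V₂ := by rw [hmdef, star_mul, sq₁]
    have hmm : star m * m = q₁ := by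
      rw [sm, hmdef, mul_assoc, ← mul_assoc (star V₂), h2, one_mul, jq₁]
    have hexp : star F₂ * F₂ = q₁ - star a * a := by
      have sF₂ : star F₂ = star m * q₁ := by rw [hF₂', star_mul, sq₁]
      rw [sF₂, hF₂', mul_assoc, ← mul_assoc q₁ q₁, jq₁]
      have hq₁m : q₁ * m = m - V₁ * a := by
        rw [hq₁def, sub_mul, one_mul, hadef, hp₁def, mul_assoc]
      rw [hq₁m, mul_sub, hmm]
      have sa : star a = star m * V₁ := by rw [hadef, star_mul, star_star]
      have hstar : star m * (V₁ * a) = star a * a := by rw [sa, mul_assoc]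
      rw [hstar]
    have haz : a = 0 := by
      have : q₁ - star a * a = q₁ := hexp.symm.trans hA'
      have h0 : star a * a = 0 := by
        have := sub_eq_self.mp this
        exact this
      exact (CStarRing.star_mul_self_eq_zero_iff a).mp h0
    have hqm : q₁ * m = m := by
      rw [hq₁def, sub_mul, one_mul, hp₁def, mul_assoc, ← hadef, haz, mul_zero, sub_zero]
    have hF₂m : F₂ = m := hF₂'.trans hqm
    have hmB : m * star m = q₁ := by rw [← hF₂m]; exact hB'
    have : r₂ = q₁ := by
      rw [← hmB, sm, hmdef, ← mul_assoc, mul_assoc V₂ q₁ q₁, jq₁, d1]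
    rw [hCform, this, sub_self]
  tfae_have 1 ↔ 5 := by
    constructor
    · intro h0
      have hqsum : qv = q₁ + q₂ :=
        (sub_eq_zero.mp (hCform3.symm.trans h0)).symm
      have hanti : q₁ * q₂ + q₂ * q₁ = 0 := by
        have hE : (q₁ + q₂) * (q₁ + q₂) = (q₁ + q₂) + (q₁ * q₂ + q₂ * q₁) := by
          simp only [add_mul, mul_add, jq₁, jq₂]; abel
        have := jqv
        rw [hqsum] at this
        rw [hE] at this
        exact add_eq_left.mp this
      have hq12 : q₁ * q₂ = 0 := anticommOf q₁ q₂ jq₁ jq₂ hanti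
      have hq21 : q₂ * q₁ = 0 := anticommOf q₂ q₁ jq₂ jq₁ (by rw [add_comm]; exact hanti)
      constructor
      · apply le_antisymm
        · intro x hx
          have hqx : qv x = x := (mkv x).mp hx
          have hsplit : x = q₁ x + q₂ x := by
            have := DFunLike.congr_fun hqsum x
            simp only [ContinuousLinearMap.add_apply] at this
            rw [← this, hqx]
          rw [hsplit]
          exact Submodule.add_mem _
            (Submodule.mem_sup_left ((mk₁ _).mpr (pq₁ x)))
            (Submodule.mem_sup_right ((mk₂ _).mpr (pq₂ x)))
        · refine sup_le ?_ ?_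
          · intro x hx
            rw [LinearMap.mem_ker] at hx ⊢; simp only [ContinuousLinearMap.coe_coe] at hx ⊢
            have : adjoint (V₁ ∘L V₂) x = adjoint V₂ ((adjoint V₁) x) :=
              DFunLike.congr_fun (star_mul V₁ V₂) x
            rw [this, hx, map_zero]
          · intro x hx
            rw [LinearMap.mem_ker] at hx ⊢; simp only [ContinuousLinearMap.coe_coe] at hx ⊢
            have hsv : star (V₁ * V₂) = star V₁ * star V₂ := by
              rw [hc, star_mul]
            have : adjoint (V₁ ∘L V₂) x = adjoint V₁ ((adjoint V₂) x) :=
              DFunLike.congr_fun hsv x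
            rw [this, hx, map_zero]
      · intro x hx y hy
        have hx' : q₁ x = x := (mk₁ x).mp hx
        have hy' : q₂ y = y := (mk₂ y).mp hy
        calc ⟪x, y⟫_ℂ = ⟪q₁ x, q₂ y⟫_ℂ := by rw [hx', hy']
          _ = ⟪x, q₁ (q₂ y)⟫_ℂ := saInner sq₁ x (q₂ y)
          _ = 0 := by
              have := DFunLike.congr_fun hq12 y
              simp only [ContinuousLinearMap.mul_apply, ContinuousLinearMap.zero_apply] at this
              rw [this, inner_zero_right]
    · rintro ⟨hker, horth⟩
      have hq12 : q₁ * q₂ = 0 := by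
        ext x
        simp only [ContinuousLinearMap.mul_apply, ContinuousLinearMap.zero_apply]
        refine ext_inner_left ℂ fun v => ?_
        rw [inner_zero_right, ← saInner sq₁ v (q₂ x)]
        exact horth _ ((mk₁ _).mpr (pq₁ v)) _ ((mk₂ _).mpr (pq₂ x))
      have hq21 : q₂ * q₁ = 0 := by
        ext x
        simp only [ContinuousLinearMap.mul_apply, ContinuousLinearMap.zero_apply]
        refine ext_inner_left ℂ fun v => ?_
        rw [inner_zero_right, ← saInner sq₂ v (q₁ x)]
        exact inner_eq_zero_symm.mp
          (horth _ ((mk₁ _).mpr (pq₁ x)) _ ((mk₂ _).mpr (pq₂ v)))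
      have js : (q₁ + q₂) * (q₁ + q₂) = q₁ + q₂ := by
        simp only [add_mul, mul_add, jq₁, jq₂, hq12, hq21, add_zero, zero_add]
      have ss : star (q₁ + q₂) = q₁ + q₂ := by rw [star_add, sq₁, sq₂]
      have hrgs : LinearMap.range ((q₁ + q₂ : H →L[ℂ] H) : H →ₗ[ℂ] H) = LinearMap.range (qv : H →ₗ[ℂ] H) := by
        rw [rgqv, hker]
        ext x
        rw [projMemRange js]
        constructor
        · intro hx
          have hx1 : (q₁ + q₂) x = q₁ x + q₂ x := rfl
          rw [← hx]
          rw [hx1]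
          exact Submodule.add_mem _
            (Submodule.mem_sup_left ((mk₁ _).mpr (pq₁ x)))
            (Submodule.mem_sup_right ((mk₂ _).mpr (pq₂ x)))
        · intro hx
          obtain ⟨u, hu, w, hw, rfl⟩ := Submodule.mem_sup.mp hx
          have hu' : q₁ u = u := (mk₁ u).mp hu
          have hw' : q₂ w = w := (mk₂ w).mp hw
          have hq2u : q₂ u = 0 := by
            have := DFunLike.congr_fun hq21 u
            simp only [ContinuousLinearMap.mul_apply, ContinuousLinearMap.zero_apply] at this
            rw [hu'] at this
            exact this
          have hq1w : q₁ w = 0 := by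
            have := DFunLike.congr_fun hq12 w
            simp only [ContinuousLinearMap.mul_apply, ContinuousLinearMap.zero_apply] at this
            rw [hw'] at this
            exact this
          have : (q₁ + q₂) (u + w) = q₁ u + q₁ w + (q₂ u + q₂ w) := by
            simp only [ContinuousLinearMap.add_apply, map_add]; abel
          rw [this, hu', hw', hq2u, hq1w]
          abel
      have : qv = q₁ + q₂ := projExt jqv js sqv ss hrgs.symm
      rw [hCform3, this]
      abel
  tfae_have 1 ↔ 6 := by
    constructor
    · intro h0
      have hsum1 : r₁ + r₂ + pv = 1 :=
        (sub_eq_zero.mp (hCform4.symm.trans h0)).symm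
      have hanti : r₁ * r₂ + r₂ * r₁ = 0 := by
        have hE : (r₁ + r₂ + pv) * (r₁ + r₂ + pv)
            = (r₁ + r₂ + pv) + (r₁ * r₂ + r₂ * r₁) := by
          simp only [add_mul, mul_add, jr₁, jr₂, iv, zr₁pv, zpvr₁, zr₂pv, zpvr₂,
            add_zero, zero_add]
          abel
        rw [hsum1, mul_one] at hE
        exact (add_eq_left.mp hE.symm)
      have hr12 : r₁ * r₂ = 0 := anticommOf r₁ r₂ jr₁ jr₂ hanti
      refine ⟨?_, ?_, ?_, ?_⟩
      · rw [Submodule.eq_top_iff']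
        intro x
        have hx : r₁ x + r₂ x + pv x = x := by
          have := DFunLike.congr_fun hsum1 x
          simpa [ContinuousLinearMap.add_apply, ContinuousLinearMap.one_apply] using this
        rw [← hx]
        refine Submodule.add_mem _ (Submodule.mem_sup_left (Submodule.add_mem _
          (Submodule.mem_sup_left ?_) (Submodule.mem_sup_right ?_)))
          (Submodule.mem_sup_right ?_)
        · exact (mir₁ _).mpr (by
            simpa [ContinuousLinearMap.mul_apply] using DFunLike.congr_fun jr₁ x)
        · exact (mir₂ _).mpr (by
            simpa [ContinuousLinearMap.mul_apply] using DFunLike.congr_fun jr₂ x)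
        · exact ⟨(star (V₁ * V₂)) x, rfl⟩
      · intro x hx y hy
        have hx' : r₁ x = x := (mir₁ x).mp hx
        have hy' : r₂ y = y := (mir₂ y).mp hy
        calc ⟪x, y⟫_ℂ = ⟪r₁ x, r₂ y⟫_ℂ := by rw [hx', hy']
          _ = ⟪x, r₁ (r₂ y)⟫_ℂ := saInner sr₁ x (r₂ y)
          _ = 0 := by
              have := DFunLike.congr_fun hr12 y
              simp only [ContinuousLinearMap.mul_apply, ContinuousLinearMap.zero_apply] at this
              rw [this, inner_zero_right]
      · intro x hx y hy
        exact inner_eq_zero_symm.mp ((Submodule.mem_orthogonal _ x).mp hx.2 y hy)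
      · intro x hx y hy
        exact inner_eq_zero_symm.mp ((Submodule.mem_orthogonal _ x).mp hx.2 y hy)
    · rintro ⟨htop, ho12, -, -⟩
      have pr₁ : ∀ x : H, r₁ (r₁ x) = r₁ x := fun x => by
        simpa [ContinuousLinearMap.mul_apply] using DFunLike.congr_fun jr₁ x
      have pr₂ : ∀ x : H, r₂ (r₂ x) = r₂ x := fun x => by
        simpa [ContinuousLinearMap.mul_apply] using DFunLike.congr_fun jr₂ x
      have hr12 : r₁ * r₂ = 0 := by
        ext x
        simp only [ContinuousLinearMap.mul_apply, ContinuousLinearMap.zero_apply]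
        refine ext_inner_left ℂ fun v => ?_
        rw [inner_zero_right, ← saInner sr₁ v (r₂ x)]
        exact ho12 _ ((mir₁ _).mpr (pr₁ v)) _ ((mir₂ _).mpr (pr₂ x))
      have hr21 : r₂ * r₁ = 0 := by
        ext x
        simp only [ContinuousLinearMap.mul_apply, ContinuousLinearMap.zero_apply]
        refine ext_inner_left ℂ fun v => ?_
        rw [inner_zero_right, ← saInner sr₂ v (r₁ x)]
        exact inner_eq_zero_symm.mp
          (ho12 _ ((mir₁ _).mpr (pr₁ x)) _ ((mir₂ _).mpr (pr₂ v)))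
      have hSfix : ∀ x : H, r₁ x + r₂ x + pv x = x := by
        intro x
        have hx : x ∈ (LinearMap.range (V₁ : H →ₗ[ℂ] H) ⊓ (LinearMap.range (V₁ ∘L V₂ : H →ₗ[ℂ] H))ᗮ) ⊔
            (LinearMap.range (V₂ : H →ₗ[ℂ] H) ⊓ (LinearMap.range (V₁ ∘L V₂ : H →ₗ[ℂ] H))ᗮ) ⊔
            LinearMap.range (V₁ ∘L V₂ : H →ₗ[ℂ] H) := htop ▸ Submodule.mem_top
        obtain ⟨w, hw, cc, hcc, rfl⟩ := Submodule.mem_sup.mp hx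
        obtain ⟨u, hu, v, hv, rfl⟩ := Submodule.mem_sup.mp hw
        have hu' : r₁ u = u := (mir₁ u).mp hu
        have hv' : r₂ v = v := (mir₂ v).mp hv
        have hcc' : pv cc = cc := (mrv cc).mp hcc
        have hr₂u : r₂ u = 0 := by
          have := DFunLike.congr_fun hr21 u
          simp only [ContinuousLinearMap.mul_apply, ContinuousLinearMap.zero_apply] at this
          rw [hu'] at this; exact this
        have hpvu : pv u = 0 := by
          have := DFunLike.congr_fun zpvr₁ u
          simp only [ContinuousLinearMap.mul_apply, ContinuousLinearMap.zero_apply] at this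
          rw [hu'] at this; exact this
        have hr₁v : r₁ v = 0 := by
          have := DFunLike.congr_fun hr12 v
          simp only [ContinuousLinearMap.mul_apply, ContinuousLinearMap.zero_apply] at this
          rw [hv'] at this; exact this
        have hpvv : pv v = 0 := by
          have := DFunLike.congr_fun zpvr₂ v
          simp only [ContinuousLinearMap.mul_apply, ContinuousLinearMap.zero_apply] at this
          rw [hv'] at this; exact this
        have hr₁c : r₁ cc = 0 := by
          have := DFunLike.congr_fun zr₁pv cc
          simp only [ContinuousLinearMap.mul_apply, ContinuousLinearMap.zero_apply] at this
          rw [hcc'] at this; exact this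
        have hr₂c : r₂ cc = 0 := by
          have := DFunLike.congr_fun zr₂pv cc
          simp only [ContinuousLinearMap.mul_apply, ContinuousLinearMap.zero_apply] at this
          rw [hcc'] at this; exact this
        simp only [map_add]
        rw [hu', hv', hcc', hr₂u, hpvu, hr₁v, hpvv, hr₁c, hr₂c]
        abel
      have hsum1 : r₁ + r₂ + pv = 1 := by
        ext x
        simpa [ContinuousLinearMap.add_apply, ContinuousLinearMap.one_apply] using hSfix x
      rw [hCform4, hsum1, sub_self]
  tfae_finish
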